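/- Let F be a mean expansive non-autonomous system with constant c on a metric space where closed balls of finite radius are compact. For any x₀ ∈ X and λ > 0, there exists N > 0 such that for all x ∈ X, if (1/n)Σ_{i=0}^{n-1} d(F_i(x₀), F_i(x)) ≤ c for all 1 ≤ n ≤ N, then d(x₀, x) < λ. -/

import Mathlib

open Filter

/-- The time-`n` map of the non-autonomous system generated by `f`. -/
def iterN {X : Type*} (f : ℕ → X → X) : ℕ → X → X
  | 0 => id
  | n + 1 => f (n + 1) ∘ iterN f n

lemma iterN_continuous {X : Type*} [MetricSpace X] (f : ℕ → X → X)
    (hf : ∀ i, Continuous (f i)) : ∀ n, Continuous (iterN f n)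
  | 0 => continuous_id
  | n + 1 => (hf (n + 1)).comp (iterN_continuous f hf n)

theorem stmt15 {X : Type*} [MetricSpace X]
    (hX : ∀ (x : X) (r : ℝ), IsCompact (Metric.closedBall x r))
    (f : ℕ → X → X) (hf : ∀ i, Continuous (f i))
    (c : ℝ) (hc : c ∈ Set.Ioo (0:ℝ) 1)
    (hexp : ∀ x y : X, x ≠ y →
      c < limsup (fun n : ℕ => (n:ℝ)⁻¹ * ∑ i ∈ Finset.range n,
        dist (iterN f i x) (iterN f i y)) atTop) :
    ∀ (x₀ : X), ∀ l > (0:ℝ), ∃ N : ℕ, 0 < N ∧ ∀ x : X,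
      (∀ n : ℕ, 1 ≤ n → n ≤ N →
        (n:ℝ)⁻¹ * ∑ i ∈ Finset.range n, dist (iterN f i x₀) (iterN f i x) ≤ c) →
      dist x₀ x < l := by
  intro x₀ l hl
  by_contra hcon
  push_neg at hcon
  choose u hu hd using fun N => hcon (N + 1) (Nat.succ_pos N)
  have hball : ∀ N, u N ∈ Metric.closedBall x₀ c := by
    intro N
    have h1 := hu N 1 le_rfl (Nat.succ_le_succ (Nat.zero_le N))
    simp only [Finset.range_one, Finset.sum_singleton, Nat.cast_one, inv_one, one_mul] at h1
    simpa [Metric.mem_closedBall, dist_comm, iterN] using h1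
  obtain ⟨x, hxball, φ, hφ, hconv⟩ := (hX x₀ c).tendsto_subseq hball
  have hld : l ≤ dist x₀ x := by
    have ht : Tendsto (fun k => dist x₀ (u (φ k))) atTop (nhds (dist x₀ x)) :=
      (Tendsto.dist tendsto_const_nhds hconv)
    exact le_of_tendsto_of_tendsto' tendsto_const_nhds ht (fun k => hd (φ k))
  have hne : x₀ ≠ x := by
    intro h
    rw [← h, dist_self] at hld
    exact absurd hld (not_le.mpr hl)
  have key : ∀ n : ℕ, (n:ℝ)⁻¹ * ∑ i ∈ Finset.range n,
      dist (iterN f i x₀) (iterN f i x) ≤ c := by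
    intro n
    rcases Nat.eq_zero_or_pos n with rfl | hn
    · simpa using hc.1.le
    · set g : X → ℝ := fun y => (n:ℝ)⁻¹ * ∑ i ∈ Finset.range n,
        dist (iterN f i x₀) (iterN f i y) with hg
      have hgc : Continuous g := by
        apply Continuous.mul continuous_const
        exact continuous_finset_sum _ fun i _ =>
          Continuous.dist continuous_const (iterN_continuous f hf i)
      have hle : ∀ᶠ k in atTop, g (u (φ k)) ≤ c := by
        filter_upwards [eventually_ge_atTop n] with k hk
        exact hu (φ k) n hn (le_trans (le_trans hk (hφ.le_apply)) (Nat.le_succ _))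
      exact le_of_tendsto ((hgc.tendsto x).comp hconv) hle
  have hcob : IsCoboundedUnder (· ≤ ·) atTop (fun n : ℕ => (n:ℝ)⁻¹ * ∑ i ∈ Finset.range n,
      dist (iterN f i x₀) (iterN f i x)) := by
    apply IsBoundedUnder.isCoboundedUnder_le
    refine isBoundedUnder_of ⟨0, fun n => ?_⟩
    exact mul_nonneg (by positivity) (Finset.sum_nonneg fun i _ => dist_nonneg)
  have hls := limsup_le_of_le hcob (Eventually.of_forall key)
  exact absurd (hexp x₀ x hne) (not_lt.mpr hls)
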